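/- For every integer n ≥ 2, the gonality of the complete graph K_n equals n − 1. -/

import Mathlib

open Finset

/-- A finite loopless multigraph on a vertex type `V`, given by a symmetric
edge-multiplicity function with zero diagonal. -/
structure Multigraph (V : Type) [Fintype V] [DecidableEq V] where
  m : V → V → ℕ
  symm : ∀ u v, m u v = m v u
  loopless : ∀ v, m v v = 0

namespace Multigraph

variable {V : Type} [Fintype V] [DecidableEq V] (G : Multigraph V)

/-- The underlying simple graph: adjacent iff joined by at least one edge. -/
def toSimpleGraph : SimpleGraph V where
  Adj u v := 0 < G.m u v
  symm := by
    constructor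
    intro u v h
    change 0 < G.m u v at h
    change 0 < G.m v u
    rw [G.symm v u]
    exact h
  loopless := by
    constructor
    intro v h
    change 0 < G.m v v at h
    rw [G.loopless v] at h
    exact lt_irrefl 0 h

/-- A multigraph is connected if its underlying simple graph is. -/
def Connected : Prop := G.toSimpleGraph.Connected

/-- The valence of a vertex: the number of edges incident to it. -/
def val (v : V) : ℕ := ∑ w, G.m v w

end Multigraph

/-- The degree of a divisor: the sum of its values. -/
def Divisor.deg {V : Type} [Fintype V] (D : V → ℤ) : ℤ := ∑ v, D v

/-- A divisor is effective if all its values are nonnegative. -/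
def Divisor.Effective {V : Type} (D : V → ℤ) : Prop := ∀ v, 0 ≤ D v

namespace Multigraph

variable {V : Type} [Fintype V] [DecidableEq V] (G : Multigraph V)

/-- The result of firing the vertex `v`: `v` loses its valence many chips, and
every other vertex `w` gains `m v w` chips. -/
def fire (v : V) (D : V → ℤ) : V → ℤ :=
  fun w => D w + (G.m v w : ℤ) - if w = v then (G.val v : ℤ) else 0

/-- Two divisors are equivalent if one is obtained from the other by a finite
sequence of firing moves. -/
def Equivalent (D D' : V → ℤ) : Prop :=
  Relation.ReflTransGen (fun A B => ∃ v, B = G.fire v A) D D'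

/-- A divisor `D` wins the Gonality Game if for every vertex `q`, the divisor
`D - 1_q` is equivalent to an effective divisor. -/
def Winning (D : V → ℤ) : Prop :=
  ∀ q : V, ∃ D' : V → ℤ,
    G.Equivalent (fun w => D w - if w = q then 1 else 0) D' ∧ Divisor.Effective D'

/-- The gonality of `G`: the minimum degree of an effective divisor that wins
the Gonality Game. -/
noncomputable def gonality : ℕ :=
  sInf {n : ℕ | ∃ D : V → ℤ, Divisor.Effective D ∧ G.Winning D ∧ Divisor.deg D = (n : ℤ)}

end Multigraph

/-- The multigraph associated to a simple graph: one edge for each adjacency. -/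
def Multigraph.ofSimpleGraph {V : Type} [Fintype V] [DecidableEq V]
    (G : SimpleGraph V) [DecidableRel G.Adj] : Multigraph V where
  m u v := if G.Adj u v then 1 else 0
  symm := by
    intro u v
    by_cases h : G.Adj u v
    · simp [h, h.symm]
    · have h' : ¬ G.Adj v u := fun hvu => h hvu.symm
      simp [h, h']
  loopless := by intro v; simp


namespace KnGonality

open Multigraph

variable {n : ℕ}

/-- Abbreviation for the multigraph of the complete graph. -/
noncomputable abbrev Kg (n : ℕ) : Multigraph (Fin n) :=
  Multigraph.ofSimpleGraph (⊤ : SimpleGraph (Fin n))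

lemma Kg_m (u v : Fin n) : (Kg n).m u v = if u = v then 0 else 1 := by
  show (if (⊤ : SimpleGraph (Fin n)).Adj u v then 1 else 0) = _
  by_cases h : u = v <;> simp [h]

lemma Kg_val (v : Fin n) (hn : 1 ≤ n) : ((Kg n).val v : ℤ) = n - 1 := by
  have : ((Kg n).val v : ℤ) = ∑ w, ((Kg n).m v w : ℤ) := by
    unfold Multigraph.val; push_cast; ring
  rw [this]
  have h2 : ∀ w, ((Kg n).m v w : ℤ) = 1 - (if v = w then 1 else 0) := by
    intro w; rw [Kg_m]; by_cases h : v = w <;> simp [h]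
  rw [Finset.sum_congr rfl (fun w _ => h2 w), Finset.sum_sub_distrib]
  simp [Finset.sum_ite_eq]

lemma Kg_fire (hn : 1 ≤ n) (v : Fin n) (D : Fin n → ℤ) (w : Fin n) :
    (Kg n).fire v D w = D w + 1 - if w = v then (n : ℤ) else 0 := by
  unfold Multigraph.fire
  have hm : ((Kg n).m v w : ℤ) = if v = w then 0 else 1 := by
    rw [Kg_m]; by_cases h : v = w <;> simp [h]
  rw [hm, Kg_val v hn]
  by_cases h : w = v
  · subst h; simp; ring
  · have h' : ¬ v = w := fun e => h e.symm
    simp [h, h']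

/-- Structure of equivalence on `K_n`: each firing adds the all-ones vector
minus `n` times a basis vector. -/
lemma equiv_struct (hn : 1 ≤ n) {D E : Fin n → ℤ} (h : (Kg n).Equivalent D E) :
    ∃ c : Fin n → ℤ, ∀ v, E v = D v + (∑ u, c u) - n * c v := by
  induction h with
  | refl => exact ⟨0, by simp⟩
  | tail _ hstep ih =>
    obtain ⟨c, hc⟩ := ih
    obtain ⟨v, rfl⟩ := hstep
    refine ⟨fun w => c w + if w = v then 1 else 0, fun w => ?_⟩
    rw [Kg_fire hn, hc w]
    have hsum : (∑ u, (c u + if u = v then (1:ℤ) else 0)) = (∑ u, c u) + 1 := by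
      rw [Finset.sum_add_distrib]
      simp [Finset.sum_ite_eq']
    rw [hsum]
    by_cases h : w = v <;> simp [h] <;> ring

/-- Firing every vertex of a finite set once. -/
lemma fire_set (hn : 1 ≤ n) (D : Fin n → ℤ) (S : Finset (Fin n)) :
    (Kg n).Equivalent D (fun w => D w + S.card - if w ∈ S then (n:ℤ) else 0) := by
  classical
  induction S using Finset.induction_on with
  | empty =>
    have : (fun w => D w + (∅ : Finset (Fin n)).card - if w ∈ (∅ : Finset (Fin n)) then (n:ℤ) else 0) = D := by
      funext w; simp
    rw [this]
    exact Relation.ReflTransGen.refl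
  | @insert v S hvS ih =>
    refine Relation.ReflTransGen.tail ih ⟨v, ?_⟩
    funext w
    rw [Kg_fire hn]
    have hcard : ((insert v S).card : ℤ) = S.card + 1 := by
      rw [Finset.card_insert_of_notMem hvS]; push_cast; ring
    rw [hcard]
    by_cases h : w = v
    · have hv : w ∈ insert v S := by rw [h]; exact Finset.mem_insert_self v S
      simp [h, hvS]; ring
    · by_cases h2 : w ∈ S
      · simp [h, h2, Finset.mem_insert]; ring
      · have : w ∉ insert v S := by simp [Finset.mem_insert, h, h2]
        simp [h, h2, this]; ring

/-- Lower bound: every effective winning divisor on `K_n` has degree at least `n-1`. -/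
lemma lower (hn : 2 ≤ n) (d : ℕ) (D : Fin n → ℤ) (hD : Divisor.Effective D)
    (hW : (Kg n).Winning D) (hdeg : Divisor.deg D = (d : ℤ)) : (n : ℤ) - 1 ≤ (d : ℤ) := by
  classical
  have hn1 : 1 ≤ n := by omega
  have hnZ : (2:ℤ) ≤ n := by exact_mod_cast hn
  by_contra hlt
  push_neg at hlt
  have hd2 : (d : ℤ) ≤ (n : ℤ) - 2 := by omega
  -- a vertex with no chips
  have hq : ∃ q, D q = 0 := by
    by_contra h
    push_neg at h
    have h1 : ∀ v, (1:ℤ) ≤ D v := fun v => lt_of_le_of_ne (hD v) (Ne.symm (h v))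
    have h2 : (n:ℤ) ≤ Divisor.deg D := by
      have : (n:ℤ) = ∑ _v : Fin n, (1:ℤ) := by simp
      rw [this]
      exact Finset.sum_le_sum (fun v _ => h1 v)
    rw [hdeg] at h2
    omega
  obtain ⟨q, hq⟩ := hq
  obtain ⟨E, hEq, hEeff⟩ := hW q
  obtain ⟨c, hc⟩ := equiv_struct hn1 hEq
  set k := ∑ u, c u with hk
  -- degree of E
  have hdegE : ∑ v, E v = (d:ℤ) - 1 := by
    have : ∑ v, E v = ∑ v, ((D v - if v = q then 1 else 0) + k - (n:ℤ) * c v) :=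
      Finset.sum_congr rfl (fun v _ => hc v)
    rw [this]
    rw [Finset.sum_sub_distrib, Finset.sum_add_distrib, Finset.sum_sub_distrib,
      ← Finset.mul_sum, Finset.sum_const, Finset.card_univ, Fintype.card_fin,
      Finset.sum_ite_eq']
    have hD' : ∑ v, D v = (d:ℤ) := hdeg
    simp [hD', hk]
  -- bounds on individual values
  have hDub : ∀ v, D v ≤ (d:ℤ) := by
    intro v
    have h := Finset.single_le_sum (f := D) (fun i _ => hD i) (Finset.mem_univ v)
    exact h.trans (le_of_eq hdeg)
  have hEub : ∀ v, E v ≤ (d:ℤ) - 1 := by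
    intro v
    have := Finset.single_le_sum (f := E) (fun i _ => hEeff i) (Finset.mem_univ v)
    rw [hdegE] at this; exact this
  have ht : ∀ v, k - (n:ℤ) * c v = E v - D v + (if v = q then 1 else 0) := by
    intro v; have := hc v; linarith [this]
  have hiteb : ∀ v, (0:ℤ) ≤ (if v = q then (1:ℤ) else 0) ∧ (if v = q then (1:ℤ) else 0) ≤ 1 := by
    intro v; by_cases h : v = q <;> simp [h]
  have htub : ∀ v, k - (n:ℤ) * c v ≤ (n:ℤ) - 2 := by
    intro v
    have h1 := hEub v
    have h2 := hD v
    have h3 := (hiteb v).2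
    rw [ht v]; linarith
  have htlb : ∀ v, -((n:ℤ) - 2) ≤ k - (n:ℤ) * c v := by
    intro v
    have h1 := hEeff v
    have h2 := hDub v
    have h3 := (hiteb v).1
    rw [ht v]; linarith
  -- min and max of c
  obtain ⟨u, -, hu⟩ := Finset.exists_min_image Finset.univ c ⟨q, Finset.mem_univ q⟩
  obtain ⟨w, -, hw⟩ := Finset.exists_max_image Finset.univ c ⟨q, Finset.mem_univ q⟩
  have huw : c u ≤ c w := hu w (Finset.mem_univ w)
  have hMm : c w - c u ≤ 1 := by
    have h1 := htub u
    have h2 := htlb w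
    by_contra hcon
    push_neg at hcon
    have h3 : (2:ℤ) ≤ c w - c u := by omega
    have h4 : (n:ℤ) * 2 ≤ (n:ℤ) * (c w - c u) :=
      mul_le_mul_of_nonneg_left h3 (by linarith)
    nlinarith
  rcases eq_or_lt_of_le huw with heq | hlt2
  · -- all values of c equal: E = D - 1_q, impossible at q
    have hall : ∀ v, c v = c u := fun v =>
      le_antisymm (heq ▸ hw v (Finset.mem_univ v)) (hu v (Finset.mem_univ v))
    have hkval : k = (n:ℤ) * c u := by
      rw [hk, Finset.sum_congr rfl (fun v _ => hall v), Finset.sum_const,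
        Finset.card_univ, Fintype.card_fin]
      push_cast; ring
    have := hc q
    rw [hall q, hkval, hq] at this
    simp at this
    have := hEeff q
    omega
  · -- c takes two values
    have hcw : c w = c u + 1 := by omega
    set S := Finset.univ.filter (fun v => c v = c w) with hS
    have hwS : w ∈ S := by simp [hS]
    have huS : u ∉ S := by simp [hS]; omega
    have hs1 : 1 ≤ S.card := Finset.card_pos.2 ⟨w, hwS⟩
    have hsn : S.card < n := by
      have hss : S ⊂ Finset.univ := Finset.ssubset_univ_iff.2 (fun h => huS (h ▸ Finset.mem_univ u))
      have := Finset.card_lt_card hss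
      simpa using this
    -- value of k
    have hcompl : ∀ v ∈ Sᶜ, c v = c u := by
      intro v hv
      rw [Finset.mem_compl, hS, Finset.mem_filter] at hv
      have h1 : c v ≠ c w := fun h => hv ⟨Finset.mem_univ v, h⟩
      have h2 := hu v (Finset.mem_univ v)
      have h3 := hw v (Finset.mem_univ v)
      omega
    have hkval : k = (n:ℤ) * c u + S.card := by
      have hsplit : (∑ v ∈ S, c v) + (∑ v ∈ Sᶜ, c v) = k := Finset.sum_add_sum_compl S c
      have h1 : ∑ v ∈ S, c v = S.card * c w := by
        rw [Finset.sum_congr rfl (fun v hv => (Finset.mem_filter.1 hv).2), Finset.sum_const]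
        push_cast; ring
      have h2 : ∑ v ∈ Sᶜ, c v = ((n:ℤ) - S.card) * c u := by
        rw [Finset.sum_congr rfl hcompl, Finset.sum_const, Finset.card_compl,
          Fintype.card_fin]
        have : ((n - S.card : ℕ) : ℤ) = (n:ℤ) - S.card := by
          push_cast [Nat.cast_sub hsn.le]; ring
        rw [nsmul_eq_mul, this]
      rw [h1, h2] at hsplit
      rw [← hsplit, hcw]; ring
    -- vertices in S carry many chips
    have hDS : ∀ v ∈ S, (n:ℤ) - S.card ≤ D v := by
      intro v hv
      have hcv : c v = c u + 1 := by
        rw [(Finset.mem_filter.1 hv).2, hcw]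
      have := hc v
      rw [hcv, hkval] at this
      have h1 := hEeff v
      have h3 := (hiteb v).2
      have h4 := (hiteb v).1
      have : D v = E v + (if v = q then 1 else 0) + (n:ℤ) - S.card := by linarith
      linarith
    have hsum1 : ∑ v ∈ S, D v ≤ (d:ℤ) := by
      rw [← hdeg]
      exact Finset.sum_le_sum_of_subset_of_nonneg (Finset.subset_univ S)
        (fun v _ _ => hD v)
    have hsum2 : (S.card : ℤ) * ((n:ℤ) - S.card) ≤ ∑ v ∈ S, D v := by
      have : (S.card : ℤ) * ((n:ℤ) - S.card) = ∑ _v ∈ S, ((n:ℤ) - S.card) := by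
        rw [Finset.sum_const]; push_cast; ring
      rw [this]
      exact Finset.sum_le_sum hDS
    have hs1' : (1:ℤ) ≤ S.card := by exact_mod_cast hs1
    have hsn' : (S.card : ℤ) ≤ (n:ℤ) - 1 := by
      have : (S.card : ℤ) < (n:ℤ) := by exact_mod_cast hsn
      omega
    nlinarith [hsum1, hsum2, hs1', hsn', hd2,
      mul_nonneg (by linarith : (0:ℤ) ≤ (S.card:ℤ) - 1)
        (by linarith : (0:ℤ) ≤ (n:ℤ) - 1 - (S.card:ℤ))]

end KnGonality

/-- For every integer `n ≥ 2`, the gonality of the complete graph `K_n`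
equals `n - 1`. -/
theorem gonality_completeGraph (n : ℕ) (hn : 2 ≤ n) :
    (Multigraph.ofSimpleGraph (⊤ : SimpleGraph (Fin n))).gonality = n - 1 := by
  classical
  haveI : NeZero n := ⟨by omega⟩
  have hn1 : 1 ≤ n := by omega
  set D0 : Fin n → ℤ := fun v => if v = 0 then 0 else 1 with hD0
  have hEff : Divisor.Effective D0 := by
    intro v; by_cases h : v = 0 <;> simp [hD0, h]
  have hdeg : Divisor.deg D0 = ((n - 1 : ℕ) : ℤ) := by
    unfold Divisor.deg
    have : ∀ v : Fin n, D0 v = 1 - (if v = 0 then 1 else 0) := by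
      intro v; by_cases h : v = 0 <;> simp [hD0, h]
    rw [Finset.sum_congr rfl (fun v _ => this v), Finset.sum_sub_distrib,
      Finset.sum_ite_eq', Finset.sum_const, Finset.card_univ, Fintype.card_fin]
    simp
    push_cast [Nat.cast_sub hn1]
    ring
  have hWin : (KnGonality.Kg n).Winning D0 := by
    intro q
    by_cases hq : q = 0
    · -- fire everything except 0
      subst hq
      set S : Finset (Fin n) := ({0} : Finset (Fin n))ᶜ with hS
      have hcard : (S.card : ℤ) = (n:ℤ) - 1 := by
        rw [hS, Finset.card_compl, Finset.card_singleton, Fintype.card_fin]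
        push_cast [Nat.cast_sub hn1]; ring
      refine ⟨_, KnGonality.fire_set hn1 (fun w => D0 w - if w = (0 : Fin n) then 1 else 0) S, ?_⟩
      intro v
      rw [hcard]
      by_cases h : v = 0
      · subst h
        have hv : (0 : Fin n) ∉ S := by simp [hS]
        simp [hD0, hv]
        have : (2:ℤ) ≤ n := by exact_mod_cast hn
        linarith
      · have hv : v ∈ S := by simp [hS, h]
        simp [hD0, h, hv]
    · refine ⟨fun w => D0 w - if w = q then 1 else 0, Relation.ReflTransGen.refl, ?_⟩
      intro v
      by_cases h : v = q
      · simp [hD0, h, hq]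
      · by_cases h0 : v = 0
        · simp [hD0, h0, Ne.symm hq]
        · simp [hD0, h, h0]
  apply le_antisymm
  · exact Nat.sInf_le ⟨D0, hEff, hWin, hdeg⟩
  · refine le_csInf ⟨n - 1, ⟨D0, hEff, hWin, hdeg⟩⟩ ?_
    rintro d ⟨D, hDEff, hDWin, hDdeg⟩
    have := KnGonality.lower hn d D hDEff hDWin hDdeg
    omega
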